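/- Let m be a positive integer, let B be an m×m real positive semidefinite matrix, and let β ≥ 0 satisfy 8·β·‖B‖_{2→2} < 1, where ‖B‖_{2→2} is the spectral (ℓ2→ℓ2 operator) norm. Then the Rademacher average satisfies 2^{-m} Σ_{ε∈{-1,1}^m} exp( β · εᵀ B ε ) ≤ exp( β · trace(B) / (1 − 8·β·‖B‖_{2→2}) ). -/

import Mathlib

open Finset

/-- Spectral (ℓ2→ℓ2 operator) norm of a real square matrix. -/
noncomputable def specNorm {m : ℕ} (A : Matrix (Fin m) (Fin m) ℝ) : ℝ :=
  ‖Matrix.toEuclideanCLM (𝕜 := ℝ) A‖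

section Aux

open Real MeasureTheory

lemma aux_gauss_lin_integrable (c : ℝ) :
    Integrable (fun x : ℝ => Real.exp (-(x ^ 2 / 2) + c * x)) := by
  have h : (fun x : ℝ => Real.exp (-(x ^ 2 / 2) + c * x))
      = fun x : ℝ => Real.exp (c ^ 2 / 2) * Real.exp (-(1/2 : ℝ) * (x - c) ^ 2) := by
    funext x; rw [← Real.exp_add]; congr 1; ring
  rw [h]
  exact ((integrable_exp_neg_mul_sq (by norm_num : (0:ℝ) < 1/2)).comp_sub_right c).const_mul _

lemma aux_gauss_lin (c : ℝ) :
    ∫ x : ℝ, Real.exp (-(x ^ 2 / 2) + c * x)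
      = Real.sqrt (2 * π) * Real.exp (c ^ 2 / 2) := by
  have h : (fun x : ℝ => Real.exp (-(x ^ 2 / 2) + c * x))
      = fun x : ℝ => Real.exp (c ^ 2 / 2) * Real.exp (-(1/2 : ℝ) * (x - c) ^ 2) := by
    funext x; rw [← Real.exp_add]; congr 1; ring
  rw [h, MeasureTheory.integral_const_mul,
    integral_sub_right_eq_self (fun x : ℝ => Real.exp (-(1/2 : ℝ) * x ^ 2)) c,
    integral_gaussian, show π / (1/2 : ℝ) = 2 * π by ring, mul_comm]

lemma aux_gauss_sq_integrable {a : ℝ} (ha : a < 1/2) :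
    Integrable (fun x : ℝ => Real.exp (-(x ^ 2 / 2) + a * x ^ 2)) := by
  have h : (fun x : ℝ => Real.exp (-(x ^ 2 / 2) + a * x ^ 2))
      = fun x : ℝ => Real.exp (-(1/2 - a) * x ^ 2) := by
    funext x; congr 1; ring
  rw [h]
  exact integrable_exp_neg_mul_sq (by linarith)

lemma aux_gauss_sq {a : ℝ} (ha : a < 1/2) :
    ∫ x : ℝ, Real.exp (-(x ^ 2 / 2) + a * x ^ 2)
      = Real.sqrt (2 * π) / Real.sqrt (1 - 2 * a) := by
  have h : (fun x : ℝ => Real.exp (-(x ^ 2 / 2) + a * x ^ 2))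
      = fun x : ℝ => Real.exp (-(1/2 - a) * x ^ 2) := by
    funext x; congr 1; ring
  rw [h, integral_gaussian, show π / (1/2 - a) = (2 * π) / (1 - 2 * a) by
    rw [div_eq_div_iff (by linarith) (by linarith)]; ring]
  exact Real.sqrt_div (by positivity) _

lemma aux_rademacher (m : ℕ) (w : Fin m → ℝ) :
    ∑ ε : Fin m → Bool, Real.exp (∑ j, (if ε j then (1:ℝ) else -1) * w j)
      = ∏ j, (Real.exp (w j) + Real.exp (-(w j))) := by
  have key := Finset.prod_univ_sum (fun _ : Fin m => (Finset.univ : Finset Bool))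
    (fun j b => Real.exp ((if b then (1:ℝ) else -1) * w j))
  rw [Fintype.piFinset_univ] at key
  simp_rw [Real.exp_sum]
  rw [← key]
  refine Finset.prod_congr rfl fun j _ => ?_
  rw [Fintype.sum_bool]
  simp [one_mul, neg_one_mul]

lemma aux_factor {x d : ℝ} (hx : 0 ≤ x) (hd : 0 < d) (hxd : x + d ≤ 1) :
    1 / Real.sqrt (1 - x) ≤ Real.exp (x / (2 * d)) := by
  have h1x : 0 < 1 - x := by linarith
  have h1 : Real.exp (-(x / d)) ≤ 1 - x := by
    have h2 : 1 + x / d ≤ Real.exp (x / d) := by linarith [Real.add_one_le_exp (x / d)]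
    have h3 : 0 < 1 + x / d := by positivity
    have h4 : Real.exp (-(x / d)) = 1 / Real.exp (x / d) := by
      rw [Real.exp_neg]; ring
    rw [h4]
    have h5 : 1 / Real.exp (x / d) ≤ 1 / (1 + x / d) :=
      one_div_le_one_div_of_le h3 h2
    refine h5.trans ?_
    rw [div_le_iff₀ h3]
    have hnn : x * (1 - d - x) / d ≥ 0 := by
      apply div_nonneg _ hd.le
      apply mul_nonneg hx
      linarith
    have heq : (1 - x) * (1 + x / d) - 1 = x * (1 - d - x) / d := by
      field_simp; ring
    linarith
  have h6 : Real.exp (-(x / (2 * d))) ≤ Real.sqrt (1 - x) := by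
    have : Real.exp (-(x / (2 * d))) = Real.sqrt (Real.exp (-(x / d))) := by
      rw [← Real.exp_half]; congr 1; ring
    rw [this]
    exact Real.sqrt_le_sqrt h1
  have h7 : 0 < Real.exp (-(x / (2 * d))) := Real.exp_pos _
  have := one_div_le_one_div_of_le h7 h6
  refine this.trans ?_
  rw [one_div, ← Real.exp_neg, neg_neg]

lemma aux_eig_le {m : ℕ} {B : Matrix (Fin m) (Fin m) ℝ} (hB : B.IsHermitian) (i : Fin m) :
    |hB.eigenvalues i| ≤ specNorm B := by
  set v : EuclideanSpace ℝ (Fin m) := hB.eigenvectorBasis i with hv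
  have hnorm : ‖v‖ = 1 := hB.eigenvectorBasis.orthonormal.1 i
  have happ : Matrix.toEuclideanCLM (𝕜 := ℝ) B v = hB.eigenvalues i • v := by
    apply (WithLp.equiv 2 (Fin m → ℝ)).injective
    rw [WithLp.equiv_apply, Matrix.ofLp_toEuclideanCLM]
    have h1 : Matrix.toLin' B (WithLp.equiv 2 (Fin m → ℝ) v)
        = B.mulVec ⇑(hB.eigenvectorBasis i) := by
      rw [Matrix.toLin'_apply]; rfl
    rw [← WithLp.equiv_apply, ← Matrix.toLin'_apply, h1, hB.mulVec_eigenvectorBasis]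
    rfl
  have hle := (Matrix.toEuclideanCLM (𝕜 := ℝ) B).le_opNorm v
  rw [happ, norm_smul, hnorm, Real.norm_eq_abs, mul_one, mul_one] at hle
  unfold specNorm
  exact hle

end Aux

set_option maxHeartbeats 2000000 in
open MeasureTheory in
theorem rademacher_chaos_mgf_bound
    (m : ℕ) (hm : 0 < m) (B : Matrix (Fin m) (Fin m) ℝ) (hB : B.PosSemidef)
    (β : ℝ) (hβ0 : 0 ≤ β) (hβ : 8 * β * specNorm B < 1) :
    (∑ ε : Fin m → Bool,
        Real.exp (β * ∑ j : Fin m, ∑ k : Fin m,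
          (if ε j then (1 : ℝ) else -1) * B j k * (if ε k then (1 : ℝ) else -1)))
        / 2 ^ m
      ≤ Real.exp (β * B.trace / (1 - 8 * β * specNorm B)) := by
  classical
  have hH : B.IsHermitian := hB.1
  set N : ℝ := specNorm B with hNdef
  have hN0 : 0 ≤ N := norm_nonneg _
  have hden : (0:ℝ) < 1 - 8 * β * N := by linarith
  set lam : Fin m → ℝ := hH.eigenvalues with hlamdef
  set U : Matrix (Fin m) (Fin m) ℝ := (hH.eigenvectorUnitary : Matrix (Fin m) (Fin m) ℝ)
    with hUdef
  have hlam0 : ∀ i, 0 ≤ lam i := fun i => hB.eigenvalues_nonneg i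
  have hlamN : ∀ i, lam i ≤ N := fun i => (abs_le.mp (aux_eig_le hH i)).2
  have hβN : 0 ≤ β * N := mul_nonneg hβ0 hN0
  have hbl0 : ∀ i, 0 ≤ β * lam i := fun i => mul_nonneg hβ0 (hlam0 i)
  have hblN : ∀ i, β * lam i ≤ β * N := fun i => mul_le_mul_of_nonneg_left (hlamN i) hβ0
  have hbl : ∀ i, β * lam i < 1/2 := fun i => by nlinarith [hblN i]
  -- orthonormality of the columns of U
  have hUU : star U * U = 1 := (Matrix.mem_unitaryGroup_iff').mp (hH.eigenvectorUnitary).2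
  have hortho : ∀ i i', (∑ j, U j i * U j i') = if i = i' then (1:ℝ) else 0 := by
    intro i i'
    have h := congrFun (congrFun hUU i) i'
    simpa [Matrix.mul_apply, Matrix.star_apply, Matrix.one_apply] using h
  -- entrywise spectral decomposition
  have hentry : ∀ j k, B j k = ∑ i, lam i * (U j i * U k i) := by
    intro j k
    have hBspec := hH.spectral_theorem
    conv_lhs => rw [hBspec, Unitary.conjStarAlgAut_apply]
    rw [Matrix.mul_apply]
    refine Finset.sum_congr rfl fun i _ => ?_
    rw [Matrix.mul_diagonal, Matrix.star_apply]
    simp only [Function.comp_apply, RCLike.ofReal_real_eq_id, id_eq, star_trivial]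
    ring
  -- trace
  have htrace : B.trace = ∑ i, lam i := by
    have h1 : B.trace = ∑ j, B j j := rfl
    rw [h1]
    simp_rw [hentry]
    rw [Finset.sum_comm]
    refine Finset.sum_congr rfl fun i _ => ?_
    rw [← Finset.mul_sum, hortho i i]
    simp
  -- sign vectors and projections
  set s : (Fin m → Bool) → Fin m → ℝ :=
    fun ε i => ∑ j, (if ε j then (1:ℝ) else -1) * U j i with hsdef
  have hQ : ∀ ε : Fin m → Bool,
      (∑ j, ∑ k, (if ε j then (1:ℝ) else -1) * B j k * (if ε k then (1:ℝ) else -1))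
        = ∑ i, lam i * (s ε i)^2 := by
    intro ε
    have lhs_eq : (∑ j, ∑ k,
        (if ε j then (1:ℝ) else -1) * B j k * (if ε k then (1:ℝ) else -1))
        = ∑ j, ∑ k, ∑ i, lam i *
          (((if ε j then (1:ℝ) else -1) * U j i) * ((if ε k then (1:ℝ) else -1) * U k i)) := by
      refine Finset.sum_congr rfl fun j _ => Finset.sum_congr rfl fun k _ => ?_
      rw [hentry j k, Finset.mul_sum, Finset.sum_mul]
      exact Finset.sum_congr rfl fun i _ => by ring
    rw [lhs_eq]
    have rhs_eq : (∑ i, lam i * (s ε i)^2)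
        = ∑ i, ∑ j, ∑ k, lam i *
          (((if ε j then (1:ℝ) else -1) * U j i) * ((if ε k then (1:ℝ) else -1) * U k i)) := by
      refine Finset.sum_congr rfl fun i _ => ?_
      rw [hsdef]
      simp only []
      rw [sq, Finset.sum_mul_sum, Finset.mul_sum]
      refine Finset.sum_congr rfl fun j _ => ?_
      rw [Finset.mul_sum]
    rw [rhs_eq]
    exact (Finset.sum_congr rfl fun j _ => Finset.sum_comm).trans Finset.sum_comm
  -- Gaussian constants
  set c : ℝ := Real.sqrt (2 * Real.pi) with hcdef
  have hc0 : 0 < c := Real.sqrt_pos.mpr (by positivity)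
  set t : Fin m → ℝ := fun i => Real.sqrt (2 * β * lam i) with htdef
  have ht2 : ∀ i, t i ^ 2 = 2 * β * lam i := by
    intro i
    rw [htdef]
    exact Real.sq_sqrt (by nlinarith [hbl0 i])
  -- Step 1 : per sign vector identity
  have hfac : ∀ (ε : Fin m → Bool) (i : Fin m),
      Real.exp (β * (lam i * (s ε i)^2)) * c
        = ∫ x : ℝ, Real.exp (-(x ^ 2 / 2) + (t i * s ε i) * x) := by
    intro ε i
    rw [aux_gauss_lin (t i * s ε i)]
    have h1 : (t i * s ε i) ^ 2 / 2 = β * (lam i * (s ε i)^2) := by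
      rw [mul_pow, ht2]; ring
    rw [h1, mul_comm]
  have hstep1 : ∀ ε : Fin m → Bool,
      Real.exp (β * ∑ i, lam i * (s ε i)^2) * c ^ m
        = ∫ x : Fin m → ℝ, ∏ i, Real.exp (-((x i) ^ 2 / 2) + (t i * s ε i) * (x i)) := by
    intro ε
    rw [MeasureTheory.integral_fintype_prod_volume_eq_prod
      (fun i (x : ℝ) => Real.exp (-(x ^ 2 / 2) + (t i * s ε i) * x))]
    rw [Finset.mul_sum, Real.exp_sum]
    calc (∏ i, Real.exp (β * (lam i * (s ε i)^2))) * c ^ m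
        = ∏ i, (Real.exp (β * (lam i * (s ε i)^2)) * c) := by
          rw [Finset.prod_mul_distrib, Finset.prod_const, Finset.card_univ, Fintype.card_fin]
      _ = ∏ i, ∫ x : ℝ, Real.exp (-(x ^ 2 / 2) + (t i * s ε i) * x) :=
          Finset.prod_congr rfl fun i _ => hfac ε i
  have hint1 : ∀ ε : Fin m → Bool,
      Integrable (fun x : Fin m → ℝ =>
        ∏ i, Real.exp (-((x i) ^ 2 / 2) + (t i * s ε i) * (x i))) :=
    fun ε => Integrable.fintype_prod (fun i => aux_gauss_lin_integrable (t i * s ε i))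
  have hint2 : Integrable (fun x : Fin m → ℝ =>
      ∏ i, Real.exp (-((x i) ^ 2 / 2) + (β * lam i) * (x i) ^ 2)) :=
    Integrable.fintype_prod (fun i => aux_gauss_sq_integrable (hbl i))
  -- pointwise bound
  have hpt : ∀ x : Fin m → ℝ,
      (∑ ε : Fin m → Bool, ∏ i, Real.exp (-((x i) ^ 2 / 2) + (t i * s ε i) * (x i)))
        ≤ 2 ^ m * ∏ i, Real.exp (-((x i) ^ 2 / 2) + (β * lam i) * (x i) ^ 2) := by
    intro x
    set w : Fin m → ℝ := fun j => ∑ i, t i * x i * U j i with hwdef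
    have hsplit : ∀ ε : Fin m → Bool,
        (∏ i, Real.exp (-((x i) ^ 2 / 2) + (t i * s ε i) * (x i)))
          = (∏ i, Real.exp (-((x i) ^ 2 / 2)))
              * Real.exp (∑ j, (if ε j then (1:ℝ) else -1) * w j) := by
      intro ε
      calc (∏ i, Real.exp (-((x i) ^ 2 / 2) + (t i * s ε i) * (x i)))
          = ∏ i, (Real.exp (-((x i) ^ 2 / 2)) * Real.exp ((t i * s ε i) * (x i))) :=
            Finset.prod_congr rfl fun i _ => Real.exp_add _ _
        _ = (∏ i, Real.exp (-((x i) ^ 2 / 2)))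
              * ∏ i, Real.exp ((t i * s ε i) * (x i)) := Finset.prod_mul_distrib
        _ = (∏ i, Real.exp (-((x i) ^ 2 / 2)))
              * Real.exp (∑ i, (t i * s ε i) * (x i)) := by rw [Real.exp_sum]
        _ = (∏ i, Real.exp (-((x i) ^ 2 / 2)))
              * Real.exp (∑ j, (if ε j then (1:ℝ) else -1) * w j) := by
            congr 1
            congr 1
            calc (∑ i, (t i * s ε i) * (x i))
                = ∑ i, ∑ j, (if ε j then (1:ℝ) else -1) * (t i * x i * U j i) := by
                  refine Finset.sum_congr rfl fun i _ => ?_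
                  rw [hsdef]
                  simp only []
                  rw [Finset.mul_sum, Finset.sum_mul]
                  exact Finset.sum_congr rfl fun j _ => by ring
              _ = ∑ j, (if ε j then (1:ℝ) else -1) * w j := by
                  rw [Finset.sum_comm]
                  exact Finset.sum_congr rfl fun j _ => by rw [Finset.mul_sum]
    have hw2 : (∑ j, (w j)^2) = ∑ i, (2 * β * lam i) * (x i)^2 := by
      have hterm : ∀ j, (w j)^2
          = ∑ i, ∑ i', ((t i * x i) * (t i' * x i')) * (U j i * U j i') := by
        intro j
        rw [hwdef]
        simp only []
        rw [sq, Finset.sum_mul_sum]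
        exact Finset.sum_congr rfl fun i _ => Finset.sum_congr rfl fun i' _ => by ring
      simp_rw [hterm]
      rw [Finset.sum_comm]
      refine Finset.sum_congr rfl fun i _ => ?_
      rw [Finset.sum_comm]
      have h3 : ∀ i', (∑ j, ((t i * x i) * (t i' * x i')) * (U j i * U j i'))
          = ((t i * x i) * (t i' * x i')) * (if i = i' then (1:ℝ) else 0) := by
        intro i'
        rw [← Finset.mul_sum, hortho i i']
      simp_rw [h3, mul_ite, mul_one, mul_zero]
      rw [Finset.sum_ite_eq Finset.univ i
        (fun i' => (t i * x i) * (t i' * x i'))]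
      simp only [Finset.mem_univ, if_true]
      have := ht2 i
      nlinarith [ht2 i]
    -- assemble
    calc (∑ ε : Fin m → Bool, ∏ i, Real.exp (-((x i) ^ 2 / 2) + (t i * s ε i) * (x i)))
        = (∏ i, Real.exp (-((x i) ^ 2 / 2)))
            * ∑ ε : Fin m → Bool, Real.exp (∑ j, (if ε j then (1:ℝ) else -1) * w j) := by
          rw [Finset.mul_sum]
          exact Finset.sum_congr rfl fun ε _ => hsplit ε
      _ = (∏ i, Real.exp (-((x i) ^ 2 / 2)))
            * ∏ j, (Real.exp (w j) + Real.exp (-(w j))) := by rw [aux_rademacher]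
      _ ≤ (∏ i, Real.exp (-((x i) ^ 2 / 2)))
            * ∏ j, (2 * Real.exp ((w j)^2 / 2)) := by
          refine mul_le_mul_of_nonneg_left ?_ (Finset.prod_nonneg fun i _ => (Real.exp_pos _).le)
          refine Finset.prod_le_prod (fun j _ => by positivity) fun j _ => ?_
          have := Real.cosh_le_exp_half_sq (w j)
          rw [Real.cosh_eq] at this
          linarith
      _ = (∏ i, Real.exp (-((x i) ^ 2 / 2))) * (2 ^ m * Real.exp (∑ j, (w j)^2 / 2)) := by
          rw [Finset.prod_mul_distrib, Finset.prod_const, Finset.card_univ, Fintype.card_fin,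
            Real.exp_sum]
      _ = 2 ^ m * ∏ i, Real.exp (-((x i) ^ 2 / 2) + (β * lam i) * (x i) ^ 2) := by
          have e1 : (∑ j, (w j)^2 / 2) = ∑ i, (β * lam i) * (x i)^2 := by
            rw [← Finset.sum_div, hw2, Finset.sum_div]
            exact Finset.sum_congr rfl fun i _ => by ring
          rw [e1, Real.exp_sum]
          rw [show (∏ i, Real.exp (-((x i) ^ 2 / 2) + (β * lam i) * (x i) ^ 2))
            = ∏ i, (Real.exp (-((x i) ^ 2 / 2)) * Real.exp ((β * lam i) * (x i) ^ 2)) from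
              Finset.prod_congr rfl fun i _ => Real.exp_add _ _]
          rw [Finset.prod_mul_distrib]
          ring
  -- integrate
  have key : (∑ ε : Fin m → Bool, Real.exp (β * ∑ i, lam i * (s ε i)^2)) * c ^ m
      ≤ 2 ^ m * ∏ i, (c / Real.sqrt (1 - 2 * (β * lam i))) := by
    calc (∑ ε : Fin m → Bool, Real.exp (β * ∑ i, lam i * (s ε i)^2)) * c ^ m
        = ∑ ε : Fin m → Bool, Real.exp (β * ∑ i, lam i * (s ε i)^2) * c ^ m := by
          rw [Finset.sum_mul]
      _ = ∑ ε : Fin m → Bool, ∫ x : Fin m → ℝ,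
            ∏ i, Real.exp (-((x i) ^ 2 / 2) + (t i * s ε i) * (x i)) :=
          Finset.sum_congr rfl fun ε _ => hstep1 ε
      _ = ∫ x : Fin m → ℝ, ∑ ε : Fin m → Bool,
            ∏ i, Real.exp (-((x i) ^ 2 / 2) + (t i * s ε i) * (x i)) :=
          (MeasureTheory.integral_finset_sum Finset.univ fun ε _ => hint1 ε).symm
      _ ≤ ∫ x : Fin m → ℝ,
            2 ^ m * ∏ i, Real.exp (-((x i) ^ 2 / 2) + (β * lam i) * (x i) ^ 2) :=
          MeasureTheory.integral_mono
            (MeasureTheory.integrable_finset_sum Finset.univ fun ε _ => hint1 ε)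
            (hint2.const_mul _) hpt
      _ = 2 ^ m * ∫ x : Fin m → ℝ,
            ∏ i, Real.exp (-((x i) ^ 2 / 2) + (β * lam i) * (x i) ^ 2) :=
          MeasureTheory.integral_const_mul _ _
      _ = 2 ^ m * ∏ i, ∫ x : ℝ, Real.exp (-(x ^ 2 / 2) + (β * lam i) * x ^ 2) := by
          rw [MeasureTheory.integral_fintype_prod_volume_eq_prod
            (fun i (x : ℝ) => Real.exp (-(x ^ 2 / 2) + (β * lam i) * x ^ 2))]
      _ = 2 ^ m * ∏ i, (c / Real.sqrt (1 - 2 * (β * lam i))) :=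
          congrArg _ (Finset.prod_congr rfl fun i _ => aux_gauss_sq (hbl i))
  have hfin : (∏ i, (c / Real.sqrt (1 - 2 * (β * lam i))))
      ≤ c ^ m * Real.exp (β * B.trace / (1 - 8 * β * N)) := by
    calc (∏ i, (c / Real.sqrt (1 - 2 * (β * lam i))))
        = c ^ m * ∏ i, (1 / Real.sqrt (1 - 2 * (β * lam i))) := by
          have hrw : ∀ i : Fin m, c / Real.sqrt (1 - 2 * (β * lam i))
              = c * (1 / Real.sqrt (1 - 2 * (β * lam i))) := fun i => by rw [mul_one_div]
          simp_rw [hrw]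
          rw [Finset.prod_mul_distrib, Finset.prod_const, Finset.card_univ, Fintype.card_fin]
      _ ≤ c ^ m * ∏ i, Real.exp (β * lam i / (1 - 8 * β * N)) := by
          refine mul_le_mul_of_nonneg_left ?_ (by positivity)
          refine Finset.prod_le_prod (fun i _ => by positivity) fun i _ => ?_
          have h := aux_factor (x := 2 * (β * lam i)) (d := 1 - 8 * β * N)
            (by nlinarith [hbl0 i]) hden (by nlinarith [hblN i, hβN])
          have harg : 2 * (β * lam i) / (2 * (1 - 8 * β * N))
              = β * lam i / (1 - 8 * β * N) := by
            rw [mul_div_mul_left _ _ (two_ne_zero)]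
          rwa [harg] at h
      _ = c ^ m * Real.exp (∑ i, β * lam i / (1 - 8 * β * N)) := by rw [Real.exp_sum]
      _ = c ^ m * Real.exp (β * B.trace / (1 - 8 * β * N)) := by
          rw [htrace]
          congr 2
          rw [← Finset.sum_div, ← Finset.mul_sum]
  have hmain : (∑ ε : Fin m → Bool, Real.exp (β * ∑ i, lam i * (s ε i)^2))
      ≤ 2 ^ m * Real.exp (β * B.trace / (1 - 8 * β * N)) := by
    have h2 : (∑ ε : Fin m → Bool, Real.exp (β * ∑ i, lam i * (s ε i)^2)) * c ^ m
        ≤ (2 ^ m * Real.exp (β * B.trace / (1 - 8 * β * N))) * c ^ m := by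
      refine key.trans ?_
      calc 2 ^ m * ∏ i, (c / Real.sqrt (1 - 2 * (β * lam i)))
          ≤ 2 ^ m * (c ^ m * Real.exp (β * B.trace / (1 - 8 * β * N))) :=
            mul_le_mul_of_nonneg_left hfin (by positivity)
        _ = (2 ^ m * Real.exp (β * B.trace / (1 - 8 * β * N))) * c ^ m := by ring
    exact le_of_mul_le_mul_right h2 (pow_pos hc0 m)
  rw [div_le_iff₀ (by positivity : (0:ℝ) < (2:ℝ) ^ m)]
  calc (∑ ε : Fin m → Bool, Real.exp (β * ∑ j, ∑ k,
        (if ε j then (1:ℝ) else -1) * B j k * (if ε k then (1:ℝ) else -1)))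
      = ∑ ε : Fin m → Bool, Real.exp (β * ∑ i, lam i * (s ε i)^2) :=
        Finset.sum_congr rfl fun ε _ => by rw [hQ ε]
    _ ≤ 2 ^ m * Real.exp (β * B.trace / (1 - 8 * β * N)) := hmain
    _ = Real.exp (β * B.trace / (1 - 8 * β * N)) * 2 ^ m := by ring
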